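/- Let (α₁,β₁),(α₂,β₂) ∈ ℝ² with αᵢ ≤ βᵢ for i = 1,2, set sᵢ = βᵢ − αᵢ, assume λ_k < α₂, and set δ = α₂/λ_k − 1 > 0. Then for all u₁,u₂ ∈ V₁ and v₁,v₂ ∈ V₂ one has ⟨J_{α₂,β₂}'(u₂+v₂) − J_{α₁,β₁}'(u₁+v₁), u₂−u₁⟩ ≤ −δ‖u₂−u₁‖² + |β₂−α₂|(‖u₂−u₁‖_{L²} + ‖v₂−v₁‖_{L²})‖v₂−v₁‖_{L²} + |α₂−α₁|‖u₁‖_{L²}‖u₂−u₁‖_{L²} + |s₂−s₁|‖u₁+v₁‖_{L²}‖u₂−u₁‖_{L²}. -/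

import Mathlib

open MeasureTheory RealInnerProductSpace Filter Topology

/-- The pairing `⟨J'_{α,β}(u), v⟩` of the Fréchet derivative of the functional
`J_{α,β}(u) = ½(B(u,u) - α∫_Ω (u⁺)² - β∫_Ω (u⁻)²)`, where the Hilbert space `X₀`
carries the Gagliardo-type inner product `B = ⟪·,·⟫` and `T : X₀ → L²(Ω)` is the
embedding into `L²(Ω)`. -/
noncomputable def DJfun {Ω : Type*} [MeasurableSpace Ω] {μ : Measure Ω}
    {X₀ : Type*} [NormedAddCommGroup X₀] [InnerProductSpace ℝ X₀]
    (T : X₀ →ₗ[ℝ] Lp ℝ 2 μ) (α β : ℝ) (u v : X₀) : ℝ :=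
  ⟪u, v⟫ - α * ⟪Lp.posPart (T u), T v⟫ + β * ⟪Lp.negPart (T u), T v⟫


section aux
variable {α : Type*} [MeasurableSpace α] {μ : Measure α}

lemma posPart_eq_add' (f : Lp ℝ 2 μ) : Lp.posPart f = f + Lp.negPart f := by
  apply Lp.ext
  filter_upwards [Lp.coeFn_posPart f, Lp.coeFn_negPart_eq_max f,
    Lp.coeFn_add f (Lp.negPart f)] with a h1 h2 h3
  rw [h1, h3, Pi.add_apply, h2]
  rcases le_total (f a) 0 with h | h
  · rw [max_eq_right h, max_eq_left (neg_nonneg.2 h)]; ring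
  · rw [max_eq_left h, max_eq_right (neg_nonpos.2 h)]; ring

lemma inner_negPart_sub_nonpos' (f g : Lp ℝ 2 μ) :
    ⟪Lp.negPart f - Lp.negPart g, f - g⟫ ≤ 0 := by
  rw [L2.inner_def]
  apply integral_nonpos_of_ae
  filter_upwards [Lp.coeFn_negPart_eq_max f, Lp.coeFn_negPart_eq_max g,
    Lp.coeFn_sub (Lp.negPart f) (Lp.negPart g), Lp.coeFn_sub f g] with a h1 h2 h3 h4
  simp only [RCLike.inner_apply, starRingEnd_apply, star_trivial, Pi.zero_apply]
  rw [h3, Pi.sub_apply, h1, h2, h4, Pi.sub_apply]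
  rcases le_total (f a) (g a) with h | h
  · exact mul_nonpos_of_nonpos_of_nonneg
      (sub_nonpos.2 h) (sub_nonneg.2 (max_le_max (neg_le_neg h) le_rfl))
  · exact mul_nonpos_of_nonneg_of_nonpos
      (sub_nonneg.2 h) (sub_nonpos.2 (max_le_max (neg_le_neg h) le_rfl))

lemma norm_negPart_sub_le' (f g : Lp ℝ 2 μ) :
    ‖Lp.negPart f - Lp.negPart g‖ ≤ ‖f - g‖ := by
  have := LipschitzWith.norm_compLp_sub_le Lp.lipschitzWith_pos_part
    (max_eq_right le_rfl) (-f) (-g)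
  rw [show (-f) - (-g) = -(f - g) by abel, norm_neg, NNReal.coe_one, one_mul] at this
  unfold Lp.negPart Lp.posPart
  exact this

lemma norm_negPart_le' (f : Lp ℝ 2 μ) : ‖Lp.negPart f‖ ≤ ‖f‖ := by
  have := LipschitzWith.norm_compLp_le Lp.lipschitzWith_pos_part
    (max_eq_right le_rfl) (-f)
  rw [norm_neg, NNReal.coe_one, one_mul] at this
  unfold Lp.negPart Lp.posPart
  exact this

lemma scalar_bC' (s2 X Y A B : ℝ) (hs2 : 0 ≤ s2) (hX : X ≤ 0) (hY : |Y| ≤ A * B) :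
    s2 * (X - Y) ≤ s2 * A * B := by
  have t2 : -Y ≤ A * B := le_trans (neg_le_abs Y) hY
  have t3 : s2 * (-Y) ≤ s2 * (A * B) := mul_le_mul_of_nonneg_left t2 hs2
  nlinarith [mul_nonneg hs2 (neg_nonneg.2 hX)]

lemma mul_inner_bound' (c x A B : ℝ) (hx : |x| ≤ A * B) : c * x ≤ |c| * A * B := by
  calc c * x ≤ |c * x| := le_abs_self _
    _ = |c| * |x| := abs_mul _ _
    _ ≤ |c| * (A * B) := mul_le_mul_of_nonneg_left hx (abs_nonneg c)
    _ = |c| * A * B := (mul_assoc _ _ _).symm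

end aux

set_option maxHeartbeats 1000000 in
theorem stmt_0
    {n : ℕ} {s : ℝ} (hs0 : 0 < s) (hs1 : s < 1) (hns : 2 * s < (n : ℝ))
    {Ωs : Set (EuclideanSpace ℝ (Fin n))} (hΩb : Bornology.IsBounded Ωs)
    (hΩm : MeasurableSet Ωs)
    {K : EuclideanSpace ℝ (Fin n) → ℝ} (hKpos : ∀ x, x ≠ 0 → 0 < K x)
    (hK1 : Integrable (fun x => min (‖x‖ ^ 2) 1 * K x))
    (hK2 : ∃ lam > 0, ∀ x, x ≠ 0 → lam * ‖x‖ ^ (-((n : ℝ) + 2 * s)) ≤ K x)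
    (hK3 : ∀ x, K (-x) = K x)
    {X₀ : Type*} [NormedAddCommGroup X₀] [InnerProductSpace ℝ X₀] [CompleteSpace X₀]
    (T : X₀ →ₗ[ℝ] Lp ℝ 2 (volume.restrict Ωs)) (hT : Function.Injective T)
    {lk lk1 : ℝ} (hlk0 : 0 < lk) (hlk : lk < lk1)
    (V₁ V₂ : Submodule ℝ X₀) [FiniteDimensional ℝ V₁]
    (hV₂ : ∀ v : X₀, v ∈ V₂ ↔ ∀ u ∈ V₁, ⟪u, v⟫ = 0 ∧ ⟪T u, T v⟫ = 0)
    (hcompl : IsCompl V₁ V₂)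
    (hV₁b : ∀ u ∈ V₁, ⟪u, u⟫ ≤ lk * ‖T u‖ ^ 2)
    (hV₂b : ∀ v ∈ V₂, lk1 * ‖T v‖ ^ 2 ≤ ⟪v, v⟫)
    -- the two parameter pairs
    {α₁ β₁ α₂ β₂ : ℝ} (h₁ : α₁ ≤ β₁) (h₂ : α₂ ≤ β₂) (hα₂ : lk < α₂) :
    ∀ (u₁ u₂ : V₁) (v₁ v₂ : V₂),
      DJfun T α₂ β₂ ((u₂ : X₀) + (v₂ : X₀)) ((u₂ : X₀) - (u₁ : X₀))
        - DJfun T α₁ β₁ ((u₁ : X₀) + (v₁ : X₀)) ((u₂ : X₀) - (u₁ : X₀))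
      ≤ -(α₂ / lk - 1) * ‖(u₂ : X₀) - (u₁ : X₀)‖ ^ 2
        + |β₂ - α₂| * (‖T ((u₂ : X₀) - (u₁ : X₀))‖ + ‖T ((v₂ : X₀) - (v₁ : X₀))‖)
            * ‖T ((v₂ : X₀) - (v₁ : X₀))‖
        + |α₂ - α₁| * ‖T (u₁ : X₀)‖ * ‖T ((u₂ : X₀) - (u₁ : X₀))‖
        + |(β₂ - α₂) - (β₁ - α₁)| * ‖T ((u₁ : X₀) + (v₁ : X₀))‖
            * ‖T ((u₂ : X₀) - (u₁ : X₀))‖ := by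
  intro u₁ u₂ v₁ v₂
  set hh : X₀ := (u₂ : X₀) - (u₁ : X₀) with hhdef
  set vd : X₀ := (v₂ : X₀) - (v₁ : X₀) with vddef
  set w₁ : X₀ := (u₁ : X₀) + (v₁ : X₀) with w₁def
  set w₂ : X₀ := (u₂ : X₀) + (v₂ : X₀) with w₂def
  have hmem : hh ∈ V₁ := sub_mem u₂.2 u₁.2
  have o1 := (hV₂ _).1 v₁.2 _ hmem
  have o2 := (hV₂ _).1 v₂.2 _ hmem
  have ovd := (hV₂ _).1 (sub_mem v₂.2 v₁.2 : vd ∈ V₂) _ hmem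
  -- basic linear identities
  have eT : T w₂ - T w₁ = T hh + T vd := by
    rw [← map_sub, ← map_add]; congr 1
    rw [hhdef, vddef, w₁def, w₂def]; abel
  set N₁ := Lp.negPart (T w₁) with N₁def
  set N₂ := Lp.negPart (T w₂) with N₂def
  clear_value hh vd w₁ w₂ N₁ N₂
  -- the key algebraic decomposition
  have z1 : ⟪(v₁ : X₀), hh⟫ = 0 := (real_inner_comm hh ((v₁ : X₀))).trans o1.1
  have z2 : ⟪(v₂ : X₀), hh⟫ = 0 := (real_inner_comm hh ((v₂ : X₀))).trans o2.1
  have z1T : ⟪T (v₁ : X₀), T hh⟫ = 0 :=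
    (real_inner_comm (T hh) (T (v₁ : X₀))).trans o1.2
  have z2T : ⟪T (v₂ : X₀), T hh⟫ = 0 :=
    (real_inner_comm (T hh) (T (v₂ : X₀))).trans o2.2
  have f1 : ⟪w₂, hh⟫ - ⟪w₁, hh⟫ = ⟪hh, hh⟫ := by
    have e : ⟪(u₂ : X₀) - (u₁ : X₀), hh⟫ = ⟪(u₂ : X₀), hh⟫ - ⟪(u₁ : X₀), hh⟫ :=
      inner_sub_left _ _ _
    rw [← hhdef] at e
    rw [w₂def, w₁def, inner_add_left, inner_add_left]
    linarith [e, z1, z2]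
  have f2 : ⟪T w₂, T hh⟫ = ⟪T hh, T hh⟫ + ⟪T (u₁ : X₀), T hh⟫ := by
    have e2 : T w₂ = T hh + T (u₁ : X₀) + T (v₂ : X₀) := by
      rw [← map_add, ← map_add]; congr 1; rw [hhdef, w₂def]; abel
    rw [e2, inner_add_left, inner_add_left]
    linarith [z2T]
  have f3 : ⟪T w₁, T hh⟫ = ⟪T (u₁ : X₀), T hh⟫ := by
    have e3 : T w₁ = T (u₁ : X₀) + T (v₁ : X₀) := by rw [w₁def, map_add]
    rw [e3, inner_add_left]
    linarith [z1T]
  have key : DJfun T α₂ β₂ w₂ hh - DJfun T α₁ β₁ w₁ hh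
      = (⟪hh, hh⟫ - α₂ * ⟪T hh, T hh⟫) + (α₁ - α₂) * ⟪T (u₁ : X₀), T hh⟫
        + (β₂ - α₂) * ⟪N₂ - N₁, T hh⟫
        + ((β₂ - α₂) - (β₁ - α₁)) * ⟪N₁, T hh⟫ := by
    rw [inner_sub_left N₂ N₁]
    simp only [DJfun, posPart_eq_add', inner_add_left, ← N₁def, ← N₂def]
    linear_combination f1 - α₂ * f2 + α₁ * f3
  -- bounds
  have hα₂0 : (0 : ℝ) < α₂ := hlk0.trans hα₂
  have bA : ⟪hh, hh⟫ - α₂ * ⟪T hh, T hh⟫ ≤ -(α₂ / lk - 1) * ‖hh‖ ^ 2 := by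
    have hb := hV₁b _ hmem
    rw [real_inner_self_eq_norm_sq hh] at hb
    rw [real_inner_self_eq_norm_sq hh, real_inner_self_eq_norm_sq (T hh)]
    have key2 : (α₂ / lk) * ‖hh‖ ^ 2 ≤ α₂ * ‖T hh‖ ^ 2 := by
      calc (α₂ / lk) * ‖hh‖ ^ 2 ≤ (α₂ / lk) * (lk * ‖T hh‖ ^ 2) :=
            mul_le_mul_of_nonneg_left hb (div_pos hα₂0 hlk0).le
        _ = α₂ * ‖T hh‖ ^ 2 := by field_simp
    nlinarith [key2]
  have bB : (α₁ - α₂) * ⟪T (u₁ : X₀), T hh⟫ ≤ |α₂ - α₁| * ‖T (u₁ : X₀)‖ * ‖T hh‖ := by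
    rw [abs_sub_comm α₂ α₁]
    exact mul_inner_bound' _ _ _ _ (abs_real_inner_le_norm _ _)
  have bC : (β₂ - α₂) * ⟪N₂ - N₁, T hh⟫
      ≤ |β₂ - α₂| * (‖T hh‖ + ‖T vd‖) * ‖T vd‖ := by
    have hs2 : (0 : ℝ) ≤ β₂ - α₂ := sub_nonneg.2 h₂
    have e : ⟪N₂ - N₁, T hh⟫ = ⟪N₂ - N₁, T w₂ - T w₁⟫ - ⟪N₂ - N₁, T vd⟫ := by
      rw [eT, inner_add_right]; ring
    have c1 : ⟪N₂ - N₁, T w₂ - T w₁⟫ ≤ 0 := by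
      rw [N₁def, N₂def]; exact inner_negPart_sub_nonpos' _ _
    have c2 : ‖N₂ - N₁‖ ≤ ‖T hh‖ + ‖T vd‖ := by
      rw [N₁def, N₂def]
      refine le_trans (norm_negPart_sub_le' _ _) ?_
      rw [eT]; exact norm_add_le _ _
    have c3 : |⟪N₂ - N₁, T vd⟫| ≤ (‖T hh‖ + ‖T vd‖) * ‖T vd‖ :=
      le_trans (abs_real_inner_le_norm _ _)
        (mul_le_mul_of_nonneg_right c2 (norm_nonneg _))
    rw [e, abs_of_nonneg hs2]
    exact scalar_bC' _ _ _ _ _ hs2 c1 c3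
  have bE : ((β₂ - α₂) - (β₁ - α₁)) * ⟪N₁, T hh⟫
      ≤ |(β₂ - α₂) - (β₁ - α₁)| * ‖T w₁‖ * ‖T hh‖ := by
    refine mul_inner_bound' _ _ _ _ ?_
    refine le_trans (abs_real_inner_le_norm _ _) ?_
    refine mul_le_mul_of_nonneg_right ?_ (norm_nonneg _)
    rw [N₁def]; exact norm_negPart_le' _
  rw [key]
  linarith [bA, bB, bC, bE]
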